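/- (Water-filling MIMO capacity) Let H be an M×N complex matrix, let λ₁, …, λ_N ≥ 0 be the eigenvalues (with multiplicity) of the Hermitian PSD matrix HᴴH with corresponding orthonormal eigenvectors v₁, …, v_N, let P > 0, and let μ > 0 be such that the water-filling powers p_i := max(μ − 1/λ_i, 0) for λ_i > 0 and p_i := 0 for λ_i = 0 satisfy Σ_{i=1}^N p_i = P. Then: (i) for every N×N complex Hermitian PSD matrix S with trace(S) ≤ P, lndet(I_M + H S Hᴴ) ≤ Σ_{i=1}^N log(1 + λ_i p_i); and (ii) the matrix S* := Σ_{i=1}^N p_i v_i v_iᴴ is Hermitian PSD with trace(S*) = P and achieves lndet(I_M + H S* Hᴴ) = Σ_{i=1}^N log(1 + λ_i p_i). Hence the maximum transmit rate under the power constraint equals Σ_i log(1 + λ_i p_i), attained by transmitting along the right singular vectors of H with water-filling power allocation. -/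

import Mathlib

open Matrix
open scoped ComplexOrder

lemma WF.psd_diag {n : ℕ} {B : Matrix (Fin n) (Fin n) ℂ} (hB : B.PosSemidef) (i : Fin n) :
    B i i = ((B i i).re : ℂ) ∧ 0 ≤ (B i i).re := by
  have h := hB.dotProduct_mulVec_nonneg (Pi.single i 1)
  have hd : dotProduct (star (Pi.single i 1)) (B *ᵥ Pi.single i 1) = B i i := by
    simp [dotProduct, Matrix.mulVec, Pi.single_apply, mul_comm]
  rw [hd] at h
  obtain ⟨h1, h2⟩ := Complex.le_def.mp h
  simp only [Complex.zero_re, Complex.zero_im] at h1 h2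
  exact ⟨Complex.ext rfl (by simp [h2.symm]), h1⟩

lemma WF.trace_eq {n : ℕ} {A : Matrix (Fin n) (Fin n) ℂ} (hA : A.IsHermitian) :
    A.trace = ((∑ i, hA.eigenvalues i : ℝ) : ℂ) := by
  conv_lhs => rw [hA.spectral_theorem]
  rw [Unitary.conjStarAlgAut_apply, Matrix.trace_mul_cycle]
  have : (star (hA.eigenvectorUnitary : Matrix (Fin n) (Fin n) ℂ)) *
      (hA.eigenvectorUnitary : Matrix (Fin n) (Fin n) ℂ) = 1 :=
    Unitary.coe_star_mul_self _
  rw [this, one_mul, Matrix.trace_diagonal]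
  push_cast
  rfl

lemma WF.prod_le_one {n : ℕ} (g : Fin n → ℝ) (hg : ∀ i, 0 ≤ g i)
    (hsum : ∑ i, g i = (n : ℝ)) : ∏ i, g i ≤ 1 := by
  by_cases hz : ∃ i, g i = 0
  · obtain ⟨i, hi⟩ := hz
    rw [Finset.prod_eq_zero (Finset.mem_univ i) hi]
    norm_num
  · push_neg at hz
    have hpos : ∀ i, 0 < g i := fun i => (hg i).lt_of_ne (fun h => hz i h.symm)
    have : ∏ i, g i = Real.exp (∑ i, Real.log (g i)) := by
      rw [Real.exp_sum]
      exact (Finset.prod_congr rfl (fun i _ => (Real.exp_log (hpos i)).symm))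
    rw [this]
    calc Real.exp (∑ i, Real.log (g i)) ≤ Real.exp (∑ i, (g i - 1)) := by
          apply Real.exp_le_exp.mpr
          exact Finset.sum_le_sum fun i _ => Real.log_le_sub_one_of_pos (hpos i)
      _ = 1 := by
          rw [Finset.sum_sub_distrib, hsum]
          simp

lemma WF.hadamard {n : ℕ} {Mm : Matrix (Fin n) (Fin n) ℂ} (h : Mm.PosSemidef)
    (hd : ∀ i, 0 < (Mm i i).re) :
    ∃ r : ℝ, 0 ≤ r ∧ Mm.det = (r : ℂ) ∧ r ≤ ∏ i, (Mm i i).re := by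
  set d : Fin n → ℝ := fun i => (Mm i i).re with hd_def
  set e : Matrix (Fin n) (Fin n) ℂ := diagonal (fun i => ((Real.sqrt (d i))⁻¹ : ℂ)) with he_def
  have he_herm : eᴴ = e := by
    rw [he_def, Matrix.diagonal_conjTranspose]
    have : (star fun i : Fin n => ((Real.sqrt (d i) : ℂ))⁻¹)
        = fun i : Fin n => ((Real.sqrt (d i) : ℂ))⁻¹ := by
      funext i
      rw [Pi.star_apply, star_inv₀, Complex.star_def, Complex.conj_ofReal]
    rw [this]
  set C : Matrix (Fin n) (Fin n) ℂ := e * Mm * e with hC_def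
  have hC : C.PosSemidef := by
    have := h.mul_mul_conjTranspose_same e
    rwa [he_herm] at this
  have hsq : ∀ i, Real.sqrt (d i) * Real.sqrt (d i) = d i :=
    fun i => Real.mul_self_sqrt (hd i).le
  have hCdiag : ∀ i, C i i = 1 := by
    intro i
    have hMii : Mm i i = ((d i : ℝ) : ℂ) := (WF.psd_diag h i).1
    rw [hC_def, Matrix.mul_diagonal, Matrix.diagonal_mul, hMii]
    rw [show ((Real.sqrt (d i) : ℂ))⁻¹ * (d i : ℂ) * ((Real.sqrt (d i) : ℂ))⁻¹
        = ((d i : ℂ)) / (((Real.sqrt (d i)) : ℂ) * ((Real.sqrt (d i)) : ℂ)) by ring]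
    rw [← Complex.ofReal_mul, hsq i, div_self]
    exact_mod_cast (hd i).ne'
  set γ : Fin n → ℝ := hC.1.eigenvalues with hγ_def
  have hγ0 : ∀ i, 0 ≤ γ i := hC.eigenvalues_nonneg
  have hγsum : ∑ i, γ i = (n : ℝ) := by
    have h1 : C.trace = ((∑ i, γ i : ℝ) : ℂ) := WF.trace_eq hC.1
    have h2 : C.trace = (n : ℂ) := by
      rw [Matrix.trace]
      simp only [Matrix.diag]
      rw [Finset.sum_congr rfl (fun i _ => hCdiag i)]
      simp
    rw [h2] at h1
    exact_mod_cast h1.symm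
  have hγprod : ∏ i, γ i ≤ 1 := WF.prod_le_one γ hγ0 hγsum
  have hdetC : C.det = ((∏ i, γ i : ℝ) : ℂ) := by
    rw [hC.1.det_eq_prod_eigenvalues]
    push_cast
    rfl
  set s : ℝ := ∏ i, Real.sqrt (d i) with hs_def
  have hs : 0 < s := Finset.prod_pos fun i _ => Real.sqrt_pos.mpr (hd i)
  have hdet_e : e.det = ((s⁻¹ : ℝ) : ℂ) := by
    rw [he_def, Matrix.det_diagonal, hs_def, Finset.prod_inv_distrib]
    push_cast
    ring
  have hCd : C.det = e.det * Mm.det * e.det := by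
    rw [hC_def, Matrix.det_mul, Matrix.det_mul]
  refine ⟨s * s * ∏ i, γ i, mul_nonneg (mul_nonneg hs.le hs.le) (Finset.prod_nonneg fun i _ => hγ0 i), ?_, ?_⟩
  · have h2 : ((∏ i, γ i : ℝ) : ℂ) = ((s⁻¹ : ℝ) : ℂ) * Mm.det * ((s⁻¹ : ℝ) : ℂ) := by
      rw [← hdetC, hCd, hdet_e]
    have hs' : ((s : ℝ) : ℂ) ≠ 0 := by exact_mod_cast hs.ne'
    push_cast [h2]
    field_simp
  · have hss : s * s = ∏ i, d i := by
      rw [hs_def, ← Finset.prod_mul_distrib]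
      exact Finset.prod_congr rfl fun i _ => hsq i
    calc s * s * ∏ i, γ i ≤ s * s * 1 := by
          apply mul_le_mul_of_nonneg_left hγprod (by positivity)
      _ = ∏ i, d i := by rw [mul_one, hss]
lemma WF.scalar {μ : ℝ} (hμ : 0 < μ) {l p q : ℝ} (hl : 0 ≤ l) (hq : 0 ≤ q)
    (hp1 : 0 < l → p = max (μ - 1 / l) 0) (hp2 : l = 0 → p = 0) :
    Real.log (1 + l * q) ≤ Real.log (1 + l * p) + (q - p) / μ := by
  rcases hl.eq_or_lt with h0 | hpos
  · rw [← h0, hp2 h0.symm]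
    simp only [zero_mul, add_zero, mul_zero, Real.log_one, sub_zero]
    positivity
  · by_cases hc : μ - 1 / l ≤ 0
    · have hp : p = 0 := by rw [hp1 hpos, max_eq_right hc]
      rw [hp]
      simp only [mul_zero, add_zero, Real.log_one, sub_zero, zero_add]
      have h1 : Real.log (1 + l * q) ≤ l * q := by
        have := Real.log_le_sub_one_of_pos (show (0:ℝ) < 1 + l * q by positivity)
        linarith
      have h2 : l * μ ≤ 1 := by
        have h3 : μ ≤ 1 / l := by linarith
        calc l * μ ≤ l * (1 / l) := by nlinarith
          _ = 1 := by field_simp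
      calc Real.log (1 + l * q) ≤ l * q := h1
        _ ≤ q / μ := by
            rw [le_div_iff₀ hμ]
            nlinarith
    · push_neg at hc
      have hp : p = μ - 1 / l := by rw [hp1 hpos, max_eq_left hc.le]
      have h1p : 1 + l * p = l * μ := by
        rw [hp]
        field_simp
        ring
      have hx : (0:ℝ) < 1 + l * q := by positivity
      have hy : (0:ℝ) < l * μ := by positivity
      have key : Real.log (1 + l * q) - Real.log (l * μ)
          ≤ (1 + l * q) / (l * μ) - 1 := by
        rw [← Real.log_div hx.ne' hy.ne']
        exact Real.log_le_sub_one_of_pos (by positivity)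
      have heq : (1 + l * q) / (l * μ) - 1 = (q - p) / μ := by
        rw [hp]
        field_simp
        ring
      rw [h1p]
      linarith [key, heq.symm.le, heq.le]

/-- Water-filling MIMO capacity: with λᵢ, vᵢ the eigenvalues and
orthonormal eigenvectors of HᴴH and water-filling powers pᵢ summing to P:
(i) every PSD S with tr(S) ≤ P satisfies lndet(I + HSHᴴ) ≤ Σᵢ log(1 + λᵢpᵢ);
(ii) S* = Σᵢ pᵢ vᵢvᵢᴴ is PSD with tr(S*) = P and achieves this bound. -/
theorem waterfilling_capacity {M N : ℕ} (H : Matrix (Fin M) (Fin N) ℂ)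
    (lam : Fin N → ℝ) (v : Fin N → (Fin N → ℂ)) (P μ : ℝ)
    (hlam : ∀ i, 0 ≤ lam i)
    (heig : ∀ i, (Hᴴ * H) *ᵥ (v i) = (lam i : ℂ) • v i)
    (hortho : ∀ i j, ∑ x, (starRingEnd ℂ) (v i x) * v j x
      = if i = j then (1 : ℂ) else 0)
    (hP : 0 < P) (hμ : 0 < μ)
    (p : Fin N → ℝ)
    (hp_pos : ∀ i, 0 < lam i → p i = max (μ - 1 / lam i) 0)
    (hp_zero : ∀ i, lam i = 0 → p i = 0)
    (hsum : ∑ i, p i = P) :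
    (∀ S : Matrix (Fin N) (Fin N) ℂ, S.PosSemidef → S.trace.re ≤ P →
        Real.log ((1 + H * S * Hᴴ).det.re) ≤ ∑ i, Real.log (1 + lam i * p i)) ∧
    (let Sstar : Matrix (Fin N) (Fin N) ℂ :=
      ∑ i, (p i : ℂ) • Matrix.vecMulVec (v i) (star (v i))
     Sstar.PosSemidef ∧ Sstar.trace = (P : ℂ) ∧
        Real.log ((1 + H * Sstar * Hᴴ).det.re) = ∑ i, Real.log (1 + lam i * p i)) := by
  -- p is nonnegative
  have hp0 : ∀ i, 0 ≤ p i := by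
    intro i
    rcases (hlam i).eq_or_lt with h | h
    · rw [hp_zero i h.symm]
    · rw [hp_pos i h]; exact le_max_right _ _
  have hlp : ∀ i, 0 ≤ lam i * p i := fun i => mul_nonneg (hlam i) (hp0 i)
  -- the unitary matrix with columns v i
  set U : Matrix (Fin N) (Fin N) ℂ := Matrix.of (fun x i => v i x) with hU_def
  have hUU : Uᴴ * U = 1 := by
    ext i j
    simp only [Matrix.mul_apply, Matrix.conjTranspose_apply, Matrix.one_apply, hU_def,
      Matrix.of_apply, Complex.star_def]
    exact hortho i j
  have hUU' : U * Uᴴ = 1 := mul_eq_one_comm.mp hUU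
  set Dc : Matrix (Fin N) (Fin N) ℂ := diagonal (fun i => (lam i : ℂ)) with hDc_def
  have hAU : Hᴴ * H * U = U * Dc := by
    ext x i
    have h := congrFun (heig i) x
    simp only [Matrix.mulVec, dotProduct, Pi.smul_apply, smul_eq_mul] at h
    rw [Matrix.mul_apply, Matrix.mul_diagonal]
    simp only [hU_def, Matrix.of_apply]
    rw [mul_comm]
    exact h
  have hA : Hᴴ * H = U * Dc * Uᴴ := by
    calc Hᴴ * H = Hᴴ * H * (U * Uᴴ) := by rw [hUU', Matrix.mul_one]
      _ = (Hᴴ * H * U) * Uᴴ := by simp only [Matrix.mul_assoc]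
      _ = U * Dc * Uᴴ := by rw [hAU]
  constructor
  · -- part (i)
    intro S hS htr
    set T : Matrix (Fin N) (Fin N) ℂ := Uᴴ * S * U with hT_def
    have hT : T.PosSemidef := by
      have := hS.mul_mul_conjTranspose_same Uᴴ
      rwa [Matrix.conjTranspose_conjTranspose] at this
    set q : Fin N → ℝ := fun i => (T i i).re with hq_def
    have hq : ∀ i, 0 ≤ q i := fun i => (WF.psd_diag hT i).2
    have hTii : ∀ i, T i i = ((q i : ℝ) : ℂ) := fun i => (WF.psd_diag hT i).1
    have htrT : T.trace = S.trace := by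
      rw [hT_def, Matrix.trace_mul_cycle, hUU', Matrix.one_mul]
    have hqsum : ∑ i, q i = S.trace.re := by
      rw [← htrT, Matrix.trace]
      simp only [Matrix.diag, hq_def]
      rw [Complex.re_sum]
    -- the square root of Dc
    set Rc : Matrix (Fin N) (Fin N) ℂ := diagonal (fun i => ((Real.sqrt (lam i)) : ℂ))
      with hRc_def
    have hRc_herm : Rcᴴ = Rc := by
      rw [hRc_def, Matrix.diagonal_conjTranspose]
      have : (star fun i : Fin N => ((Real.sqrt (lam i) : ℂ)))
          = fun i : Fin N => ((Real.sqrt (lam i) : ℂ)) := by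
        funext i
        rw [Pi.star_apply, Complex.star_def, Complex.conj_ofReal]
      rw [this]
    set B : Matrix (Fin N) (Fin N) ℂ := Rc * T * Rc with hB_def
    have hB : B.PosSemidef := by
      have := hT.mul_mul_conjTranspose_same Rc
      rwa [hRc_herm] at this
    have hDcRc : Dc = Rc * Rc := by
      have hfun : (fun i : Fin N => ((lam i : ℝ) : ℂ))
          = fun i => ((Real.sqrt (lam i) : ℂ)) * ((Real.sqrt (lam i) : ℂ)) := by
        funext i
        rw [← Complex.ofReal_mul, Real.mul_self_sqrt (hlam i)]
      rw [hRc_def, Matrix.diagonal_mul_diagonal, hDc_def, hfun]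
    have hdet1 : (1 + H * S * Hᴴ).det = (1 + B).det := by
      calc (1 + H * S * Hᴴ).det = (1 + Hᴴ * (H * S)).det :=
            Matrix.det_one_add_mul_comm (H * S) Hᴴ
        _ = (1 + U * (Dc * (Uᴴ * S))).det := by
            rw [← Matrix.mul_assoc Hᴴ H S, hA]
            simp only [Matrix.mul_assoc]
        _ = (1 + (Dc * (Uᴴ * S)) * U).det := Matrix.det_one_add_mul_comm U _
        _ = (1 + Rc * (Rc * T)).det := by
            rw [hDcRc, hT_def]
            simp only [Matrix.mul_assoc]
        _ = (1 + (Rc * T) * Rc).det := Matrix.det_one_add_mul_comm Rc _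
        _ = (1 + B).det := by rw [hB_def]
    have h1B : (1 + B).PosSemidef := Matrix.PosSemidef.add Matrix.PosSemidef.one hB
    have hBii : ∀ i, (B i i).re = lam i * q i := by
      intro i
      rw [hB_def, Matrix.mul_diagonal, Matrix.diagonal_mul, hTii i]
      rw [← Complex.ofReal_mul, ← Complex.ofReal_mul, Complex.ofReal_re]
      rw [show Real.sqrt (lam i) * q i * Real.sqrt (lam i)
          = Real.sqrt (lam i) * Real.sqrt (lam i) * q i by ring]
      rw [Real.mul_self_sqrt (hlam i)]
    have h1Bii : ∀ i, ((1 + B) i i).re = 1 + lam i * q i := by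
      intro i
      rw [Matrix.add_apply, Matrix.one_apply_eq, Complex.add_re, Complex.one_re, hBii i]
    have hd1B : ∀ i, 0 < ((1 + B) i i).re := by
      intro i
      rw [h1Bii i]
      have := mul_nonneg (hlam i) (hq i)
      linarith
    obtain ⟨r, hr0, hrdet, hrle⟩ := WF.hadamard h1B hd1B
    have hre : (1 + H * S * Hᴴ).det.re = r := by
      rw [hdet1, hrdet, Complex.ofReal_re]
    have hprod : ∏ i, ((1 + B) i i).re = ∏ i, (1 + lam i * q i) :=
      Finset.prod_congr rfl fun i _ => h1Bii i
    rw [hprod] at hrle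
    have hterm : ∀ i, Real.log (1 + lam i * q i)
        ≤ Real.log (1 + lam i * p i) + (q i - p i) / μ :=
      fun i => WF.scalar hμ (hlam i) (hq i) (hp_pos i) (hp_zero i)
    have hrhs0 : 0 ≤ ∑ i, Real.log (1 + lam i * p i) :=
      Finset.sum_nonneg fun i _ => Real.log_nonneg (by linarith [hlp i])
    rw [hre]
    rcases hr0.eq_or_lt with h | h
    · rw [← h, Real.log_zero]
      exact hrhs0
    · have hqP : ∑ i, q i ≤ P := by rw [hqsum]; exact htr
      calc Real.log r ≤ Real.log (∏ i, (1 + lam i * q i)) := by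
            apply Real.log_le_log h hrle
        _ = ∑ i, Real.log (1 + lam i * q i) :=
            Real.log_prod (fun i _ => ne_of_gt (by nlinarith [hlam i, hq i]))
        _ ≤ ∑ i, (Real.log (1 + lam i * p i) + (q i - p i) / μ) :=
            Finset.sum_le_sum fun i _ => hterm i
        _ = (∑ i, Real.log (1 + lam i * p i)) + ((∑ i, q i) - (∑ i, p i)) / μ := by
            rw [Finset.sum_add_distrib, ← Finset.sum_div, Finset.sum_sub_distrib]
        _ ≤ ∑ i, Real.log (1 + lam i * p i) := by
            have h1 : ((∑ i, q i) - (∑ i, p i)) / μ ≤ 0 := by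
              apply div_nonpos_of_nonpos_of_nonneg _ hμ.le
              rw [hsum]
              linarith
            linarith
  · -- part (ii)
    set Dp : Matrix (Fin N) (Fin N) ℂ := diagonal (fun i => (p i : ℂ)) with hDp_def
    set SS : Matrix (Fin N) (Fin N) ℂ :=
      ∑ i, (p i : ℂ) • Matrix.vecMulVec (v i) (star (v i)) with hSS_def
    have hSeq : SS = U * Dp * Uᴴ := by
      ext x y
      rw [hSS_def, Matrix.sum_apply, Matrix.mul_apply]
      refine Finset.sum_congr rfl fun i _ => ?_
      rw [Matrix.smul_apply, Matrix.vecMulVec_apply, Matrix.mul_diagonal,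
        Matrix.conjTranspose_apply]
      simp only [hU_def, Matrix.of_apply, Pi.star_apply, smul_eq_mul]
      ring
    have hDp_psd : Dp.PosSemidef :=
      Matrix.posSemidef_diagonal_iff.mpr fun i => Complex.zero_le_real.mpr (hp0 i)
    have hPsd : SS.PosSemidef := by
      rw [hSeq]
      exact hDp_psd.mul_mul_conjTranspose_same U
    have htrace : SS.trace = (P : ℂ) := by
      rw [hSeq, Matrix.trace_mul_cycle, hUU, Matrix.one_mul, Matrix.trace_diagonal, ← hsum]
      norm_cast
    have hmid : (U * Dc * Uᴴ) * (U * Dp * Uᴴ) = U * (Dc * Dp) * Uᴴ := by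
      have h1 : (U * Dc * Uᴴ) * (U * Dp * Uᴴ) = ((U * Dc) * (Uᴴ * U)) * (Dp * Uᴴ) := by
        simp only [Matrix.mul_assoc]
      rw [h1, hUU, Matrix.mul_one]
      simp only [Matrix.mul_assoc]
    have hdet2 : (1 + H * SS * Hᴴ).det = ((∏ i, (1 + lam i * p i) : ℝ) : ℂ) := by
      calc (1 + H * SS * Hᴴ).det = (1 + Hᴴ * (H * SS)).det :=
            Matrix.det_one_add_mul_comm (H * SS) Hᴴ
        _ = (1 + (U * (Dc * Dp) * Uᴴ)).det := by
            rw [← Matrix.mul_assoc Hᴴ H SS, hA, hSeq, hmid]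
        _ = (1 + Uᴴ * (U * (Dc * Dp))).det := Matrix.det_one_add_mul_comm _ Uᴴ
        _ = (1 + Dc * Dp).det := by rw [← Matrix.mul_assoc, hUU, Matrix.one_mul]
        _ = ((∏ i, (1 + lam i * p i) : ℝ) : ℂ) := by
            rw [hDc_def, hDp_def, Matrix.diagonal_mul_diagonal, ← Matrix.diagonal_one,
              Matrix.diagonal_add, Matrix.det_diagonal]
            push_cast
            rfl
    refine ⟨hPsd, htrace, ?_⟩
    rw [hdet2, Complex.ofReal_re, Real.log_prod]
    intro i _
    have := hlp i
    positivity
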